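/- Let E be a finite-dimensional real inner product space, (Ω, 𝓕, μ) a probability space with a sub-σ-algebra 𝓖 ⊆ 𝓕, L > 0, σ ≥ 0, δ ≥ 0, and η > 0. Let f, f' : E → ℝ with f L-smooth and |f'(x) − f(x)| ≤ δ for all x ∈ E. Let θ, g : Ω → E be such that θ is strongly 𝓖-measurable, g is square-integrable, f ∘ θ is integrable, ω ↦ f'(θ(ω) − η·g(ω)) is integrable, μ[g | 𝓖] = ∇f(θ) almost everywhere, and μ[‖g − ∇f(θ)‖² | 𝓖] ≤ σ² almost everywhere. Then E[f'(θ − η·g)] ≤ E[f(θ)] − η·(1 − L·η)·E[‖∇f(θ)‖²] + L·η²·σ² + δ. -/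

import Mathlib

open MeasureTheory
open scoped RealInnerProductSpace

/-- Descent lemma for functions with Lipschitz gradient. -/
lemma smooth_descent_aux {E : Type*} [NormedAddCommGroup E] [InnerProductSpace ℝ E]
    [CompleteSpace E]
    {f : E → ℝ} {L : ℝ} (hL : 0 ≤ L) (hdiff : Differentiable ℝ f)
    (hlip : ∀ x y : E, ‖gradient f x - gradient f y‖ ≤ L * ‖x - y‖)
    (x v : E) : f (x + v) ≤ f x + ⟪gradient f x, v⟫ + L / 2 * ‖v‖ ^ 2 := by
  have hgc : Continuous (gradient f) := by
    refine (LipschitzWith.of_dist_le_mul (K := ⟨L, hL⟩) fun a b => ?_).continuous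
    rw [dist_eq_norm, dist_eq_norm]; exact hlip a b
  have hline : ∀ t : ℝ, HasDerivAt (fun t : ℝ => x + t • v) v t := by
    intro t
    simpa using ((hasDerivAt_id t).smul_const v).const_add x
  have hderiv : ∀ t : ℝ, HasDerivAt (fun t : ℝ => f (x + t • v))
      ⟪gradient f (x + t • v), v⟫ t := by
    intro t
    have h1 : HasGradientAt f (gradient f (x + t • v)) (x + t • v) :=
      (hdiff (x + t • v)).hasGradientAt
    have h2 := h1.hasFDerivAt.comp_hasDerivAt t (hline t)
    simpa [InnerProductSpace.toDual_apply_apply, Function.comp_def] using h2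
  have hcont : Continuous fun t : ℝ => ⟪gradient f (x + t • v), v⟫ :=
    (hgc.comp (by continuity)).inner continuous_const
  have hFTC : ∫ t in (0:ℝ)..1, ⟪gradient f (x + t • v), v⟫ = f (x + v) - f x := by
    have := intervalIntegral.integral_eq_sub_of_hasDerivAt
      (fun t _ => hderiv t) (hcont.intervalIntegrable 0 1)
    simpa using this
  have hmono : ∫ t in (0:ℝ)..1, ⟪gradient f (x + t • v), v⟫ ≤
      ∫ t in (0:ℝ)..1, (⟪gradient f x, v⟫ + (L * ‖v‖ ^ 2) * t) := by
    refine intervalIntegral.integral_mono_on (by norm_num)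
      (hcont.intervalIntegrable 0 1)
      ((continuous_const.add (continuous_const.mul continuous_id)).intervalIntegrable 0 1)
      fun t ht => ?_
    obtain ⟨ht0, ht1⟩ := ht
    have h1 : ⟪gradient f (x + t • v), v⟫ - ⟪gradient f x, v⟫
        = ⟪gradient f (x + t • v) - gradient f x, v⟫ := by rw [inner_sub_left]
    have h2 : ⟪gradient f (x + t • v) - gradient f x, v⟫ ≤
        ‖gradient f (x + t • v) - gradient f x‖ * ‖v‖ := real_inner_le_norm _ _
    have h3 : ‖gradient f (x + t • v) - gradient f x‖ ≤ L * (t * ‖v‖) := by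
      have := hlip (x + t • v) x
      simpa [norm_smul, abs_of_nonneg ht0] using this
    nlinarith [norm_nonneg v, norm_nonneg (gradient f (x + t • v) - gradient f x)]
  have hrhs : ∫ t in (0:ℝ)..1, (⟪gradient f x, v⟫ + (L * ‖v‖ ^ 2) * t)
      = ⟪gradient f x, v⟫ + L / 2 * ‖v‖ ^ 2 := by
    have hint2 : IntervalIntegrable (fun t : ℝ => (L * ‖v‖ ^ 2) * t) MeasureTheory.volume 0 1 :=
      (continuous_const.mul continuous_id).intervalIntegrable 0 1
    rw [intervalIntegral.integral_add (intervalIntegrable_const) hint2,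
      intervalIntegral.integral_const_mul, integral_id]
    simp; ring
  linarith [hFTC ▸ hmono, hrhs ▸ hmono]

/-- The conditional expectation of an `ℒ²` function agrees with `condExpL2`. -/
lemma condexp_eq_condExpL2_aux {E : Type*} [NormedAddCommGroup E] [InnerProductSpace ℝ E]
    [CompleteSpace E]
    {Ω : Type*} {mΩ : MeasurableSpace Ω} {μ : Measure Ω} [IsFiniteMeasure μ]
    {𝒢 : MeasurableSpace Ω} (h𝒢 : 𝒢 ≤ mΩ) {g : Ω → E} (hg : MemLp g 2 μ) :
    μ[g|𝒢] =ᵐ[μ] ((condExpL2 E ℝ h𝒢 (hg.toLp g) : Ω →₂[μ] E) : Ω → E) := by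
  haveI : SigmaFinite (μ.trim h𝒢) := inferInstance
  refine (ae_eq_condExp_of_forall_setIntegral_eq h𝒢 (hg.integrable one_le_two)
    (fun s _ hμs => integrableOn_condExpL2_of_measure_ne_top h𝒢 hμs.ne _)
    (fun s hs hμs => ?_) (aestronglyMeasurable_condExpL2 h𝒢 _)).symm
  rw [integral_condExpL2_eq h𝒢 (hg.toLp g) hs hμs.ne]
  exact integral_congr_ae (ae_restrict_of_ae hg.coeFn_toLp)

/-- One-round recursion in the proof of Proposition 1: the expected value of the drifted
objective f' at the updated iterate θ − η·g is controlled by the expected value of the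
current objective f at θ, minus a gradient-norm decrease term, plus a variance term and
the drift δ. -/
theorem stmt4 {E : Type*} [NormedAddCommGroup E] [InnerProductSpace ℝ E]
    [FiniteDimensional ℝ E]
    {Ω : Type*} {mΩ : MeasurableSpace Ω} {μ : Measure Ω} [IsProbabilityMeasure μ]
    (𝒢 : MeasurableSpace Ω) (h𝒢 : 𝒢 ≤ mΩ)
    (L σ δ η : ℝ) (hL : 0 < L) (hσ : 0 ≤ σ) (hδ : 0 ≤ δ) (hη : 0 < η)
    (f f' : E → ℝ) (hdiff : Differentiable ℝ f)
    (hlip : ∀ x y : E, ‖gradient f x - gradient f y‖ ≤ L * ‖x - y‖)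
    (hdrift : ∀ x : E, |f' x - f x| ≤ δ)
    (θ g : Ω → E)
    (hθ : StronglyMeasurable[𝒢] θ)
    (hg : MemLp g 2 μ)
    (hfθ : Integrable (fun ω => f (θ ω)) μ)
    (hf' : Integrable (fun ω => f' (θ ω - η • g ω)) μ)
    (hunbiased : μ[g|𝒢] =ᵐ[μ] fun ω => gradient f (θ ω))
    (hvar : ∀ᵐ ω ∂μ, (μ[fun ω' => ‖g ω' - gradient f (θ ω')‖ ^ 2|𝒢]) ω ≤ σ ^ 2) :
    ∫ ω, f' (θ ω - η • g ω) ∂μ ≤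
      (∫ ω, f (θ ω) ∂μ) - η * (1 - L * η) * (∫ ω, ‖gradient f (θ ω)‖ ^ 2 ∂μ)
        + L * η ^ 2 * σ ^ 2 + δ := by
  classical
  letI : MeasurableSpace Ω := mΩ
  -- notation
  have hgL : ((hg.toLp g : Ω →₂[μ] E) : Ω → E) =ᵐ[μ] g := hg.coeFn_toLp
  set Y : Ω →₂[μ] E := (condExpL2 E ℝ h𝒢 (hg.toLp g) : Ω →₂[μ] E) with hYdef
  have hYX : (fun ω => gradient f (θ ω)) =ᵐ[μ] (Y : Ω → E) :=
    hunbiased.symm.trans (condexp_eq_condExpL2_aux h𝒢 hg)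
  have hX2 : MemLp (fun ω => gradient f (θ ω)) 2 μ := (Lp.memLp Y).ae_eq hYX.symm
  -- integrability of the inner product and the squares
  have hinner_int : Integrable (fun ω => ⟪gradient f (θ ω), g ω⟫) μ := by
    refine (L2.integrable_inner (𝕜 := ℝ) (Y : Ω →₂[μ] E) (hg.toLp g)).congr ?_
    filter_upwards [hYX, hgL] with ω h1 h2
    rw [← h1, h2]
  have hX2_int : Integrable (fun ω => ‖gradient f (θ ω)‖ ^ 2) μ := by
    refine (L2.integrable_inner (𝕜 := ℝ) (Y : Ω →₂[μ] E) (Y : Ω →₂[μ] E)).congr ?_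
    filter_upwards [hYX] with ω h1
    rw [← h1, real_inner_self_eq_norm_sq]
  have hg2_int : Integrable (fun ω => ‖g ω‖ ^ 2) μ := by
    refine (L2.integrable_inner (𝕜 := ℝ) (hg.toLp g) (hg.toLp g)).congr ?_
    filter_upwards [hgL] with ω h1
    rw [h1, real_inner_self_eq_norm_sq]
  have hD2 : MemLp (fun ω => g ω - gradient f (θ ω)) 2 μ := hg.sub hX2
  have hDL : ((hD2.toLp _ : Ω →₂[μ] E) : Ω → E) =ᵐ[μ] fun ω => g ω - gradient f (θ ω) :=
    hD2.coeFn_toLp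
  have hD2_int : Integrable (fun ω => ‖g ω - gradient f (θ ω)‖ ^ 2) μ := by
    refine (L2.integrable_inner (𝕜 := ℝ) (hD2.toLp _) (hD2.toLp _)).congr ?_
    filter_upwards [hDL] with ω h1
    rw [h1, real_inner_self_eq_norm_sq]
  -- the inner product integral equals the squared-norm integral
  have hIXg : ∫ ω, ⟪gradient f (θ ω), g ω⟫ ∂μ = ∫ ω, ‖gradient f (θ ω)‖ ^ 2 ∂μ := by
    have h1 : ∫ ω, ⟪gradient f (θ ω), g ω⟫ ∂μ
        = inner (𝕜 := ℝ) (Y : Ω →₂[μ] E) (hg.toLp g) := by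
      rw [L2.inner_def]
      refine integral_congr_ae ?_
      filter_upwards [hYX, hgL] with ω h1 h2
      rw [← h1, h2]
    have h2 : inner (𝕜 := ℝ) (Y : Ω →₂[μ] E) (hg.toLp g)
        = inner (𝕜 := ℝ) (Y : Ω →₂[μ] E) (Y : Ω →₂[μ] E) := by
      rw [real_inner_comm]
      exact (inner_condExpL2_eq_inner_fun h𝒢 (hg.toLp g) (Y : Ω →₂[μ] E)
        (lpMeas.aestronglyMeasurable _)).symm
    have h3 : inner (𝕜 := ℝ) (Y : Ω →₂[μ] E) (Y : Ω →₂[μ] E)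
        = ∫ ω, ‖gradient f (θ ω)‖ ^ 2 ∂μ := by
      rw [L2.inner_def]
      refine integral_congr_ae ?_
      filter_upwards [hYX] with ω h1
      rw [← h1, real_inner_self_eq_norm_sq]
    rw [h1, h2, h3]
  -- decomposition of the second moment of g
  have hg2_eq : ∫ ω, ‖g ω‖ ^ 2 ∂μ
      = (∫ ω, ‖g ω - gradient f (θ ω)‖ ^ 2 ∂μ) + ∫ ω, ‖gradient f (θ ω)‖ ^ 2 ∂μ := by
    have hpt : ∀ ω, ‖g ω‖ ^ 2 = ‖g ω - gradient f (θ ω)‖ ^ 2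
        + 2 * ⟪gradient f (θ ω), g ω⟫ - ‖gradient f (θ ω)‖ ^ 2 := by
      intro ω
      have h := norm_sub_sq_real (g ω) (gradient f (θ ω))
      have h2 : ⟪g ω, gradient f (θ ω)⟫ = ⟪gradient f (θ ω), g ω⟫ := real_inner_comm _ _
      linarith
    have hc2 : Integrable (fun ω => 2 * ⟪gradient f (θ ω), g ω⟫) μ :=
      hinner_int.const_mul 2
    have h1 : Integrable (fun ω => ‖g ω - gradient f (θ ω)‖ ^ 2
        + 2 * ⟪gradient f (θ ω), g ω⟫) μ := hD2_int.add hc2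
    rw [integral_congr_ae (Filter.Eventually.of_forall hpt), integral_sub h1 hX2_int,
      integral_add hD2_int hc2, integral_const_mul, hIXg]
    ring
  -- variance bound
  have hvar_bound : ∫ ω, ‖g ω - gradient f (θ ω)‖ ^ 2 ∂μ ≤ σ ^ 2 := by
    haveI : SigmaFinite (μ.trim h𝒢) := inferInstance
    rw [← integral_condExp h𝒢 (f := fun ω => ‖g ω - gradient f (θ ω)‖ ^ 2)]
    calc ∫ ω, (μ[fun ω' => ‖g ω' - gradient f (θ ω')‖ ^ 2|𝒢]) ω ∂μ
        ≤ ∫ _ω, σ ^ 2 ∂μ := integral_mono_ae integrable_condExp (integrable_const _) hvar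
      _ = σ ^ 2 := by simp
  -- pointwise descent inequality
  have hkey : ∀ ω, f' (θ ω - η • g ω) ≤ f (θ ω) - η * ⟪gradient f (θ ω), g ω⟫
      + L / 2 * η ^ 2 * ‖g ω‖ ^ 2 + δ := by
    intro ω
    have h1 := smooth_descent_aux hL.le hdiff hlip (θ ω) (-η • g ω)
    have h3 : θ ω + -η • g ω = θ ω - η • g ω := by
      rw [neg_smul, ← sub_eq_add_neg]
    rw [h3] at h1
    have h4 : ⟪gradient f (θ ω), -η • g ω⟫ = -η * ⟪gradient f (θ ω), g ω⟫ :=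
      real_inner_smul_right _ _ _
    have h5 : ‖-η • g ω‖ ^ 2 = η ^ 2 * ‖g ω‖ ^ 2 := by
      rw [norm_smul]
      simp [abs_of_pos hη]
      ring
    have h2 := abs_le.1 (hdrift (θ ω - η • g ω))
    rw [h4, h5] at h1
    linarith [h2.2]
  -- integrate the pointwise inequality
  have hRHS_int : Integrable (fun ω => f (θ ω) - η * ⟪gradient f (θ ω), g ω⟫
      + L / 2 * η ^ 2 * ‖g ω‖ ^ 2 + δ) μ :=
    ((hfθ.sub (hinner_int.const_mul η)).add (hg2_int.const_mul _)).add (integrable_const δ)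
  have hmain : ∫ ω, f' (θ ω - η • g ω) ∂μ ≤ ∫ ω, (f (θ ω) - η * ⟪gradient f (θ ω), g ω⟫
      + L / 2 * η ^ 2 * ‖g ω‖ ^ 2 + δ) ∂μ := integral_mono hf' hRHS_int hkey
  have hsplit : ∫ ω, (f (θ ω) - η * ⟪gradient f (θ ω), g ω⟫
      + L / 2 * η ^ 2 * ‖g ω‖ ^ 2 + δ) ∂μ
      = (∫ ω, f (θ ω) ∂μ) - η * (∫ ω, ⟪gradient f (θ ω), g ω⟫ ∂μ)
        + L / 2 * η ^ 2 * (∫ ω, ‖g ω‖ ^ 2 ∂μ) + δ := by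
    have hc1 : Integrable (fun ω => η * ⟪gradient f (θ ω), g ω⟫) μ :=
      hinner_int.const_mul η
    have hc2 : Integrable (fun ω => L / 2 * η ^ 2 * ‖g ω‖ ^ 2) μ :=
      hg2_int.const_mul _
    have h1 : Integrable (fun ω => f (θ ω) - η * ⟪gradient f (θ ω), g ω⟫) μ := hfθ.sub hc1
    have h2 : Integrable (fun ω => f (θ ω) - η * ⟪gradient f (θ ω), g ω⟫
        + L / 2 * η ^ 2 * ‖g ω‖ ^ 2) μ := h1.add hc2
    rw [integral_add h2 (integrable_const δ), integral_add h1 hc2,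
      integral_sub hfθ hc1, integral_const_mul, integral_const_mul]
    simp
  have hA : 0 ≤ ∫ ω, ‖gradient f (θ ω)‖ ^ 2 ∂μ :=
    integral_nonneg fun ω => sq_nonneg _
  have hB : 0 ≤ ∫ ω, ‖g ω - gradient f (θ ω)‖ ^ 2 ∂μ :=
    integral_nonneg fun ω => sq_nonneg _
  rw [hsplit, hIXg, hg2_eq] at hmain
  nlinarith [hmain, hvar_bound, hA, hB,
    mul_nonneg (mul_nonneg hL.le (sq_nonneg η)) hA,
    mul_nonneg (mul_nonneg hL.le (sq_nonneg η)) hB,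
    mul_nonneg (mul_nonneg hL.le (sq_nonneg η)) (sub_nonneg.2 hvar_bound)]
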